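/- Let H be an infinite-dimensional complex Hilbert space, P(H) the set of positive semidefinite bounded operators on H, and K_s the set of self-adjoint compact operators on H. Then M = P(H) + K_s is a proper quadratic module in B(H) that strictly contains P(H); in particular P(H) is not a maximal proper quadratic module in B(H). -/

import Mathlib

def IsQuadraticModule {R : Type*} [Ring R] [StarRing R] (M : Set R) : Prop :=
  (∀ a ∈ M, star a = a) ∧ (1 : R) ∈ M ∧ (∀ a ∈ M, ∀ b ∈ M, a + b ∈ M) ∧
    ∀ r : R, ∀ a ∈ M, r * a * star r ∈ M

def IsProperQuadraticModule {R : Type*} [Ring R] [StarRing R] (M : Set R) : Prop :=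
  IsQuadraticModule M ∧ (-1 : R) ∉ M

def IsMaximalProperQuadraticModule {R : Type*} [Ring R] [StarRing R] (M : Set R) : Prop :=
  IsProperQuadraticModule M ∧
    ∀ M' : Set R, IsProperQuadraticModule M' → M ⊆ M' → M' = M

open Metric ContinuousLinearMap RCLike Set
open scoped InnerProductSpace ComplexConjugate

/-- On an infinite-dimensional complex Hilbert space, `P(H) + K_s` is a proper
quadratic module strictly containing `P(H)`; in particular `P(H)` is not maximal. -/
theorem positive_plus_compact {H : Type*} [NormedAddCommGroup H]
    [InnerProductSpace ℂ H] [CompleteSpace H] (h : ¬ FiniteDimensional ℂ H) :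
    IsProperQuadraticModule
        {T : H →L[ℂ] H | ∃ p : H →L[ℂ] H, p.IsPositive ∧
          ∃ k : H →L[ℂ] H, IsSelfAdjoint k ∧ IsCompactOperator k ∧ T = p + k} ∧
      {T : H →L[ℂ] H | T.IsPositive} ⊂
        {T : H →L[ℂ] H | ∃ p : H →L[ℂ] H, p.IsPositive ∧
          ∃ k : H →L[ℂ] H, IsSelfAdjoint k ∧ IsCompactOperator k ∧ T = p + k} ∧
      ¬ IsMaximalProperQuadraticModule {T : H →L[ℂ] H | T.IsPositive} := by
  set M : Set (H →L[ℂ] H) := {T : H →L[ℂ] H | ∃ p : H →L[ℂ] H, p.IsPositive ∧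
          ∃ k : H →L[ℂ] H, IsSelfAdjoint k ∧ IsCompactOperator k ∧ T = p + k} with hMdef
  -- P ⊆ M
  have hPsubM : {T : H →L[ℂ] H | T.IsPositive} ⊆ M := fun p hp =>
    ⟨p, hp, 0, IsSelfAdjoint.zero _, isCompactOperator_zero, by simp⟩
  -- M is a quadratic module
  have hQM : IsQuadraticModule M := by
    refine ⟨?_, ?_, ?_, ?_⟩
    · rintro a ⟨p, hp, k, hk, hkc, rfl⟩
      rw [star_add, hp.isSelfAdjoint.star_eq, hk.star_eq]
    · exact ⟨1, isPositive_one, 0, IsSelfAdjoint.zero _, isCompactOperator_zero, by simp⟩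
    · rintro a ⟨p, hp, k, hk, hkc, rfl⟩ b ⟨q, hq, l, hl, hlc, rfl⟩
      exact ⟨p + q, hp.add hq, k + l, hk.add hl, hkc.add hlc, by abel⟩
    · rintro r a ⟨p, hp, k, hk, hkc, rfl⟩
      refine ⟨r * p * star r, ?_, r * k * star r, ?_, ?_, by rw [mul_add, add_mul]⟩
      · have := hp.conj_adjoint r
        simpa [mul_def, star_eq_adjoint, mul_assoc, ContinuousLinearMap.comp_assoc] using this
      · have : star (r * k * star r) = r * k * star r := by
          simp [star_mul, hk.star_eq, mul_assoc]
        exact this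
      · have hcoe : ⇑(r * k * star r) = ⇑r ∘ (⇑k ∘ ⇑(star r)) := by
          ext x; simp [mul_apply]
        have : IsCompactOperator (⇑r ∘ (⇑k ∘ ⇑(star r))) :=
          (hkc.comp_clm (star r)).clm_comp r
        rw [hcoe]; exact this
  -- M is proper
  have hproper : IsProperQuadraticModule M := by
    refine ⟨hQM, ?_⟩
    rintro ⟨p, hp, k, hk, hkc, heq⟩
    -- then ‖x‖ ≤ ‖k x‖ for all x
    have hple : ∀ x : H, ‖x‖ ≤ ‖k x‖ := by
      intro x
      have h0 := hp.inner_nonneg_left x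
      have hpx : p = -1 - k := by rw [eq_sub_iff_add_eq, ← heq]
      have h1 : (0:ℝ) ≤ re ⟪(-1 - k : H →L[ℂ] H) x, x⟫_ℂ := by rw [← hpx]; exact (RCLike.nonneg_iff.mp h0).1
      have h2 : re ⟪((-1 - k : H →L[ℂ] H)) x, x⟫_ℂ = -‖x‖^2 - re ⟪k x, x⟫_ℂ := by
        rw [ContinuousLinearMap.sub_apply, inner_sub_left, ContinuousLinearMap.neg_apply,
          ContinuousLinearMap.one_apply, inner_neg_left, map_sub, map_neg,
          @inner_self_eq_norm_sq ℂ]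
      have h3 : ‖x‖^2 ≤ -re ⟪k x, x⟫_ℂ := by linarith [h1, h2.symm ▸ h1]
      have h4 : -re ⟪k x, x⟫_ℂ ≤ ‖k x‖ * ‖x‖ := by
        calc -re ⟪k x, x⟫_ℂ ≤ |re ⟪k x, x⟫_ℂ| := neg_le_abs _
          _ ≤ ‖⟪k x, x⟫_ℂ‖ := abs_re_le_norm _
          _ ≤ ‖k x‖ * ‖x‖ := norm_inner_le_norm _ _
      rcases eq_or_lt_of_le (norm_nonneg x) with h5 | h5
      · simp [← h5]
      · have : ‖x‖ * ‖x‖ ≤ ‖k x‖ * ‖x‖ := by nlinarith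
        exact le_of_mul_le_mul_right this h5
    have hal : AntilipschitzWith 1 ⇑k := by
      rw [antilipschitzWith_iff_le_mul_dist]
      intro x y
      simpa [dist_eq_norm, ← map_sub] using hple (x - y)
    have hUI : IsUniformInducing ⇑k := hal.isUniformInducing k.uniformContinuous
    obtain ⟨K, hKc, hKnhds⟩ := hkc
    obtain ⟨ε, hε, hball⟩ := Metric.mem_nhds_iff.mp hKnhds
    have rpos : (0:ℝ) < ε/2 := by linarith
    have him : ⇑k '' closedBall (0:H) (ε/2) ⊆ K := by
      rintro _ ⟨y, hy, rfl⟩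
      exact hball (mem_ball_zero_iff.mpr
        (lt_of_le_of_lt (mem_closedBall_zero_iff.mp hy) (by linarith)))
    have htb : TotallyBounded (closedBall (0:H) (ε/2)) :=
      (totallyBounded_image_iff hUI).mp (hKc.totallyBounded.subset him)
    have hcomp : IsCompact (closedBall (0:H) (ε/2)) :=
      TotallyBounded.isCompact_of_isClosed htb Metric.isClosed_closedBall
    exact h (FiniteDimensional.of_isCompact_closedBall₀ ℂ rpos hcomp)
  -- strict inclusion: a negative rank-one operator
  have : Nontrivial H := by
    rcases subsingleton_or_nontrivial H with hs | hn
    · exact absurd (Module.Finite.of_basis (Module.Basis.empty (ι := Fin 0) (R := ℂ) (M := H))) h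
    · exact hn
  obtain ⟨x₀, hx₀⟩ := exists_ne (0 : H)
  have hx₀n : (0:ℝ) < ‖x₀‖ := norm_pos_iff.mpr hx₀
  set k₀ : H →L[ℂ] H := (innerSL ℂ x₀).smulRight x₀ with hk₀def
  have hk₀sa : IsSelfAdjoint k₀ := by
    rw [ContinuousLinearMap.isSelfAdjoint_iff_isSymmetric]
    intro x y
    simp only [hk₀def, ContinuousLinearMap.coe_coe, ContinuousLinearMap.smulRight_apply,
      innerSL_apply_apply, inner_smul_left, inner_smul_right, inner_conj_symm]
    ring
  have hk₀c : IsCompactOperator ⇑k₀ := by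
    refine ⟨(fun c : ℂ => c • x₀) '' closedBall 0 ‖x₀‖,
      (isCompact_closedBall 0 _).image (continuous_id.smul continuous_const), ?_⟩
    refine Filter.mem_of_superset (ball_mem_nhds 0 one_pos) ?_
    intro y hy
    refine ⟨⟪x₀, y⟫_ℂ, ?_, by simp [hk₀def]⟩
    have : ‖y‖ ≤ 1 := le_of_lt (mem_ball_zero_iff.mp hy)
    have := norm_inner_le_norm (𝕜 := ℂ) x₀ y
    simp only [mem_closedBall_zero_iff]
    nlinarith [norm_nonneg x₀]
  have hTmem : -k₀ ∈ M := ⟨0, isPositive_zero, -k₀, hk₀sa.neg, hk₀c.neg, by simp⟩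
  have hTnotpos : ¬ (-k₀).IsPositive := by
    intro hpos
    have h0 := hpos.inner_nonneg_left x₀
    have hval : ⟪(-k₀) x₀, x₀⟫_ℂ = -((‖x₀‖^2 * ‖x₀‖^2 : ℝ) : ℂ) := by
      simp [hk₀def, inner_smul_left, @inner_self_eq_norm_sq_to_K ℂ]

    rw [hval] at h0
    have h0' : (0:ℝ) ≤ -(‖x₀‖^2 * ‖x₀‖^2) := by simpa only [map_neg, RCLike.ofReal_re, RCLike.re_to_complex, Complex.ofReal_re, neg_neg] using (RCLike.nonneg_iff.mp h0).1
    nlinarith [pow_pos hx₀n 2]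
  have hssub : {T : H →L[ℂ] H | T.IsPositive} ⊂ M :=
    ⟨hPsubM, fun hsub => hTnotpos (hsub hTmem)⟩
  refine ⟨hproper, hssub, ?_⟩
  rintro ⟨-, hmax⟩
  exact hssub.ne.symm (hmax M hproper hPsubM)
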